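/- For the spherical pendulum F = (J,H) on TS², the set of points (q,p) ∈ TS² at which dH and dJ are linearly dependent equals {((0,0,1),(0,0,0))} ∪ { (q, (1/λ) q × k) : q³ = −λ², (q¹)² + (q²)² = 1 − λ⁴, 0 < |λ| ≤ 1 }. In particular, this set has measure zero, so F is an integrable system. -/

import Mathlib

set_option maxHeartbeats 1000000

open MeasureTheory

lemma sphere_vol_zero :
    (volume : Measure (Fin 3 → ℝ)) {q | q 0 ^ 2 + q 1 ^ 2 + q 2 ^ 2 = 1} = 0 := by
  have hmp := EuclideanSpace.volume_preserving_symm_measurableEquiv_toLp (Fin 3)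
  have hms : MeasurableSet {q : Fin 3 → ℝ | q 0 ^ 2 + q 1 ^ 2 + q 2 ^ 2 = 1} := by
    apply measurableSet_eq_fun <;> fun_prop
  rw [← hmp.measure_preimage hms.nullMeasurableSet]
  have hpre : (MeasurableEquiv.toLp 2 (Fin 3 → ℝ)).symm ⁻¹' {q | q 0 ^ 2 + q 1 ^ 2 + q 2 ^ 2 = 1}
      = Metric.sphere (0 : EuclideanSpace ℝ (Fin 3)) 1 := by
    ext x
    simp only [Set.mem_preimage, Set.mem_setOf_eq, mem_sphere_iff_norm, sub_zero]
    rw [EuclideanSpace.norm_eq, Real.sqrt_eq_one, Fin.sum_univ_three]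
    simp [sq_abs]
  rw [hpre]
  exact Measure.addHaar_sphere volume 0 1

lemma not_li_pair {M : Type*} [AddCommGroup M] [Module ℝ M] (x y : M) :
    ¬ LinearIndependent ℝ ![x, y] ↔ ∃ s t : ℝ, ¬(s = 0 ∧ t = 0) ∧ s • x + t • y = 0 := by
  rw [LinearIndependent.pair_iff]
  push_neg
  exact ⟨fun ⟨s, t, h1, h2⟩ => ⟨s, t, h2, h1⟩, fun ⟨s, t, h1, h2⟩ => ⟨s, t, h2, h1⟩⟩

lemma vec3_ext (q : Fin 3 → ℝ) (a b c : ℝ) : q = ![a, b, c] ↔ q 0 = a ∧ q 1 = b ∧ q 2 = c := by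
  constructor
  · rintro rfl; simp
  · rintro ⟨h0, h1, h2⟩; funext i; fin_cases i <;> simpa

theorem spherical_pendulum_dependence_locus
    (cross : (Fin 3 → ℝ) → (Fin 3 → ℝ) → (Fin 3 → ℝ))
    (hcross : cross = fun u v =>
      ![u 1 * v 2 - u 2 * v 1, u 2 * v 0 - u 0 * v 2, u 0 * v 1 - u 1 * v 0])
    (k : Fin 3 → ℝ) (hk : k = ![0, 0, 1])
    (TS2 : Set ((Fin 3 → ℝ) × (Fin 3 → ℝ)))
    (hTS2 : TS2 = {qp | qp.1 0 ^ 2 + qp.1 1 ^ 2 + qp.1 2 ^ 2 = 1 ∧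
      qp.1 0 * qp.2 0 + qp.1 1 * qp.2 1 + qp.1 2 * qp.2 2 = 0})
    (v₁ v₂ : ((Fin 3 → ℝ) × (Fin 3 → ℝ)) → ((Fin 3 → ℝ) × (Fin 3 → ℝ)))
    (hv₁ : v₁ = fun qp => (qp.2,
      -k + (qp.1 2 - (qp.2 0 ^ 2 + qp.2 1 ^ 2 + qp.2 2 ^ 2)) • qp.1))
    (hv₂ : v₂ = fun qp => (-(cross qp.1 k), -(cross qp.2 k)))
    (D : Set ((Fin 3 → ℝ) × (Fin 3 → ℝ)))
    (hD : D = {qp ∈ TS2 | ¬ LinearIndependent ℝ ![v₁ qp, v₂ qp]}) :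
    D = {(![0, 0, 1], ![0, 0, 0])} ∪
        {qp | ∃ l : ℝ, 0 < |l| ∧ |l| ≤ 1 ∧ qp.1 2 = -l ^ 2 ∧
          qp.1 0 ^ 2 + qp.1 1 ^ 2 = 1 - l ^ 4 ∧ qp.2 = (1 / l) • cross qp.1 k}
    ∧ (volume : Measure ((Fin 3 → ℝ) × (Fin 3 → ℝ))) D = 0 := by
  subst hcross hk hTS2 hv₁ hv₂ hD
  constructor
  · ext ⟨q, p⟩
    simp only [Set.mem_union, Set.mem_singleton_iff, Set.mem_setOf_eq, Prod.mk.injEq]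
    rw [not_li_pair]
    constructor
    · rintro ⟨⟨hq, hqp⟩, s, t, hst, heq⟩
      have h10 := congrFun (congrArg Prod.fst heq) 0
      have h11 := congrFun (congrArg Prod.fst heq) 1
      have h12 := congrFun (congrArg Prod.fst heq) 2
      have h20 := congrFun (congrArg Prod.snd heq) 0
      have h21 := congrFun (congrArg Prod.snd heq) 1
      have h22 := congrFun (congrArg Prod.snd heq) 2
      simp only [Prod.fst, Prod.snd, Pi.add_apply, Pi.smul_apply, Pi.neg_apply, smul_eq_mul,
        Matrix.cons_val_zero, Matrix.cons_val_one, Matrix.head_cons, Matrix.cons_val_two,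
        Matrix.tail_cons, Matrix.vecHead, Matrix.vecTail, Prod.smul_fst, Prod.smul_snd,
        Prod.fst_add, Prod.snd_add, Prod.fst_zero, Prod.snd_zero, Pi.zero_apply,
        Function.comp_apply, Fin.succ_zero_eq_one, Fin.succ_one_eq_two, mul_one, mul_zero,
        zero_mul, sub_zero, zero_sub, neg_neg, neg_zero, add_zero, zero_add,
        neg_add_rev] at h10 h11 h12 h20 h21 h22
      set P := p 0 ^ 2 + p 1 ^ 2 + p 2 ^ 2 with hPdef
      have e1 : s * p 0 - t * q 1 = 0 := by linarith
      have e2 : s * p 1 + t * q 0 = 0 := by linarith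
      have e3 : s * p 2 = 0 := by linarith
      have e4 : s * ((q 2 - P) * q 0) - t * p 1 = 0 := by linarith
      have e5 : s * ((q 2 - P) * q 1) + t * p 0 = 0 := by linarith
      have e6 : s * (-1 + (q 2 - P) * q 2) = 0 := by linarith
      by_cases hs : s = 0
      · subst hs
        have ht : t ≠ 0 := fun h => hst ⟨rfl, h⟩
        have hq1 : q 1 = 0 := by
          rcases mul_eq_zero.mp (show t * q 1 = 0 by linarith) with h | h
          exacts [absurd h ht, h]
        have hq0 : q 0 = 0 := by
          rcases mul_eq_zero.mp (show t * q 0 = 0 by linarith) with h | h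
          exacts [absurd h ht, h]
        have hp1 : p 1 = 0 := by
          rcases mul_eq_zero.mp (show t * p 1 = 0 by linarith) with h | h
          exacts [absurd h ht, h]
        have hp0 : p 0 = 0 := by
          rcases mul_eq_zero.mp (show t * p 0 = 0 by linarith) with h | h
          exacts [absurd h ht, h]
        have hq2sq : q 2 ^ 2 = 1 := by nlinarith
        have hq2ne : q 2 ≠ 0 := fun h => by rw [h] at hq2sq; norm_num at hq2sq
        have hp2 : p 2 = 0 := by
          rcases mul_eq_zero.mp (show q 2 * p 2 = 0 by nlinarith) with h | h
          exacts [absurd h hq2ne, h]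
        rcases mul_eq_zero.mp (show (q 2 - 1) * (q 2 + 1) = 0 by nlinarith) with h | h
        · exact Or.inl ⟨(vec3_ext q 0 0 1).mpr ⟨hq0, hq1, by linarith⟩,
            (vec3_ext p 0 0 0).mpr ⟨hp0, hp1, hp2⟩⟩
        · refine Or.inr ⟨1, by norm_num, by norm_num, by push_cast; linarith, by
            rw [hq0, hq1]; norm_num, ?_⟩
          funext i
          fin_cases i <;>
            simp [hp0, hp1, hp2, hq0, hq1]
      · have hp2 : p 2 = 0 := by
          rcases mul_eq_zero.mp e3 with h | h
          exacts [absurd h hs, h]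
        have f1 : s * p 0 = t * q 1 := by linarith
        have f2 : s * p 1 = -(t * q 0) := by linarith
        have f4 : s * ((q 2 - P) * q 0) = t * p 1 := by linarith
        have f5 : s * ((q 2 - P) * q 1) = -(t * p 0) := by linarith
        have e6' : (q 2 - P) * q 2 = 1 := by
          rcases mul_eq_zero.mp e6 with h | h
          exacts [absurd h hs, by linarith]
        have g4 : s ^ 2 * ((q 2 - P) * q 0) = -(t ^ 2 * q 0) := by
          linear_combination s * f4 + t * f2
        have g5 : s ^ 2 * ((q 2 - P) * q 1) = -(t ^ 2 * q 1) := by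
          linear_combination s * f5 - t * f1
        by_cases hq01 : q 0 = 0 ∧ q 1 = 0
        · obtain ⟨hq0, hq1⟩ := hq01
          have hp0' : p 0 = 0 := by
            rcases mul_eq_zero.mp (show s * p 0 = 0 by rw [f1, hq1, mul_zero]) with h | h
            exacts [absurd h hs, h]
          have hp1' : p 1 = 0 := by
            rcases mul_eq_zero.mp (show s * p 1 = 0 by rw [f2, hq0, mul_zero, neg_zero]) with h | h
            exacts [absurd h hs, h]
          have hPz : P = 0 := by rw [hPdef, hp0', hp1', hp2]; ring
          have hq2sq : q 2 ^ 2 = 1 := by nlinarith [e6']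
          rcases mul_eq_zero.mp (show (q 2 - 1) * (q 2 + 1) = 0 by nlinarith) with h | h
          · exact Or.inl ⟨(vec3_ext q 0 0 1).mpr ⟨hq0, hq1, by linarith⟩,
              (vec3_ext p 0 0 0).mpr ⟨hp0', hp1', hp2⟩⟩
          · refine Or.inr ⟨1, by norm_num, by norm_num, by push_cast; linarith, by
              rw [hq0, hq1]; norm_num, ?_⟩
            funext i
            fin_cases i <;>
              simp [hp0', hp1', hp2, hq0, hq1]
        · have hA : s ^ 2 * (q 2 - P) = -t ^ 2 := by
            rcases not_and_or.mp hq01 with h | h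
            · have := mul_right_cancel₀ h
                (show (s ^ 2 * (q 2 - P)) * q 0 = (-t ^ 2) * q 0 by linear_combination g4)
              linarith
            · have := mul_right_cancel₀ h
                (show (s ^ 2 * (q 2 - P)) * q 1 = (-t ^ 2) * q 1 by linear_combination g5)
              linarith
          have h6 : -(t ^ 2) * q 2 = s ^ 2 := by
            linear_combination (-(q 2)) * hA + s ^ 2 * e6'
          have ht : t ≠ 0 := by
            intro h
            rw [h] at h6
            have : s = 0 := by nlinarith [h6]
            exact hs this
          have hq2v : q 2 = -(s / t) ^ 2 := by
            field_simp
            linarith [h6]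
          have h2 : (s / t) ^ 2 ≤ 1 := by
            nlinarith [hq, hq2v, sq_nonneg (q 0), sq_nonneg (q 1), sq_nonneg ((s / t) ^ 2 - 1)]
          refine Or.inr ⟨s / t, abs_pos.mpr (div_ne_zero hs ht), abs_le.mpr
            ⟨by nlinarith [sq_nonneg (s / t + 1)], by nlinarith [sq_nonneg (s / t - 1)]⟩,
            hq2v, by linear_combination hq - (q 2 - (s / t) ^ 2) * hq2v, ?_⟩
          have hs' : s ≠ 0 := hs
          rw [one_div_div]
          funext i
          fin_cases i <;>
            simp only [Pi.smul_apply, smul_eq_mul, Matrix.cons_val_zero, Matrix.cons_val_one,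
              Matrix.head_cons, Matrix.cons_val_two, Matrix.tail_cons] <;>
            norm_num
          · field_simp
            linear_combination f1
          · field_simp
            linear_combination f2
          · exact hp2
    · rintro (⟨hq, hp⟩ | ⟨l, hl0, hl1, hq2, hq01, hp⟩)
      · subst hq hp
        refine ⟨⟨by simp, by simp⟩, 1, 0, by norm_num, ?_⟩
        rw [Prod.ext_iff]
        constructor <;> funext i <;> fin_cases i <;> simp
      · have hl : l ≠ 0 := abs_pos.mp hl0
        have hp0 : p 0 = 1 / l * q 1 := by rw [hp]; simp
        have hp1 : p 1 = -(1 / l * q 0) := by rw [hp]; simp; try ring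
        have hp2 : p 2 = 0 := by rw [hp]; simp
        set P := p 0 ^ 2 + p 1 ^ 2 + p 2 ^ 2 with hPdef
        have hP : P = 1 / l ^ 2 - l ^ 2 := by
          rw [hPdef, hp0, hp1, hp2]
          field_simp
          linear_combination hq01
        refine ⟨⟨by nlinarith [hq01, hq2], by rw [hp0, hp1, hp2]; try ring⟩,
          l, 1, fun h => hl h.1, ?_⟩
        rw [Prod.ext_iff]
        constructor <;> funext i <;> fin_cases i <;>
          simp [Matrix.vecHead, Matrix.vecTail, hP, hq2, hp0, hp1, hp2, -mul_eq_zero] <;>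
          (try field_simp) <;> (try ring)
  · refine measure_mono_null
      (t := {q : Fin 3 → ℝ | q 0 ^ 2 + q 1 ^ 2 + q 2 ^ 2 = 1} ×ˢ Set.univ) ?_ ?_
    · rintro ⟨q, p⟩ ⟨⟨h1, _⟩, _⟩
      exact ⟨h1, trivial⟩
    · rw [Measure.volume_eq_prod, Measure.prod_prod, sphere_vol_zero, zero_mul]
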